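/- arXiv:2010.02017 — 4 statements merged into one kernel-verified Lean document; each statement's English description precedes it below -/
import Mathlib

section
/- Under the link model hypotheses and condition (Eq. 1), the two continuous clocks never drift apart by more than half the buffer size minus the access-time margin: for all t ≥ 0, |c_s(t) − c_r(t)| ≤ N/2 − f⁺·max{τ_s, τ_r}. (Lemma 1 of the paper, the key bound for correctness of the threshold controller ContTh(𝒯).) -/
/-- One-sided drift bound: under the control hypothesis (for the direction
`cs` ahead of `cr`), the difference `cs t - cr t` never exceeds
`𝒯 + (fHi - sLo) * (Tctr + Tosc)`. -/
lemma clock_drift_aux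
    (sLo sHi fLo fHi δ Tctr Tosc 𝒯 : ℝ)
    (hs : sLo ≤ sHi) (hsf : sHi ≤ fLo) (hf : fLo ≤ fHi)
    (hδ0 : 0 < δ)
    (hTctr : 0 ≤ Tctr) (hTosc : 0 ≤ Tosc)
    (cs cr : ℝ → ℝ)
    (hcs : Differentiable ℝ cs) (hcr : Differentiable ℝ cr)
    (hinit : cs 0 - cr 0 < δ)
    (hrate_s : ∀ t, 0 ≤ t → deriv cs t ∈ Set.Icc sLo fHi)
    (hrate_r : ∀ t, 0 ≤ t → deriv cr t ∈ Set.Icc sLo fHi)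
    (hctl : ∀ t, Tctr + Tosc ≤ t →
      (∀ τ ∈ Set.Icc (t - Tctr - Tosc) t, cs τ - cr τ ≥ 𝒯) →
      deriv cs t ≤ sHi ∧ fLo ≤ deriv cr t)
    (hT1 : δ ≤ 𝒯) :
    ∀ t, 0 ≤ t → cs t - cr t ≤ 𝒯 + (fHi - sLo) * (Tctr + Tosc) := by
  set d : ℝ → ℝ := fun t => cs t - cr t with hd_def
  have hd : Differentiable ℝ d := hcs.sub hcr
  have hderiv : ∀ t, deriv d t = deriv cs t - deriv cr t := by
    intro t; exact deriv_sub (hcs t) (hcr t)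
  have hdeq : ∀ t, d t = cs t - cr t := fun _ => rfl
  set T : ℝ := Tctr + Tosc with hT_def
  have hT0 : 0 ≤ T := by positivity
  have hfs : (0:ℝ) ≤ fHi - sLo := by linarith
  set M : ℝ := 𝒯 + (fHi - sLo) * T with hM_def
  have hM𝒯 : 𝒯 ≤ M := by nlinarith
  -- Claim A: increments are bounded by (fHi - sLo) * (b - a)
  have claimA : ∀ a b, 0 ≤ a → a ≤ b → d b ≤ d a + (fHi - sLo) * (b - a) := by
    intro a b ha hab
    set h : ℝ → ℝ := fun t => (fHi - sLo) * t - d t with hh_def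
    have hh : Differentiable ℝ h := (differentiable_const _|>.mul differentiable_id).sub hd
    have hmono : MonotoneOn h (Set.Ici (0:ℝ)) := by
      apply monotoneOn_of_deriv_nonneg (convex_Ici 0) hh.continuous.continuousOn
        (hh.differentiableOn.mono interior_subset)
      intro x hx
      rw [interior_Ici] at hx
      have hx0 : (0:ℝ) ≤ x := le_of_lt hx
      have : deriv h x = (fHi - sLo) - deriv d x := by
        simp [hh_def, deriv_sub, hd x, differentiable_const, mul_comm]
      rw [this, hderiv]
      have h1 := hrate_s x hx0
      have h2 := hrate_r x hx0
      simp only [Set.mem_Icc] at h1 h2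
      linarith [h1.2, h2.1]
    have := hmono (Set.mem_Ici.mpr ha) (Set.mem_Ici.mpr (ha.trans hab)) hab
    simp only [hh_def] at this
    nlinarith
  intro t₁ ht₁
  by_contra hcon
  push_neg at hcon
  -- the set of times up to t₁ where d ≤ 𝒯
  set S : Set ℝ := Set.Icc 0 t₁ ∩ d ⁻¹' Set.Iic 𝒯 with hS_def
  have hSclosed : IsClosed S :=
    isClosed_Icc.inter (isClosed_Iic.preimage hd.continuous)
  have hSne : S.Nonempty := ⟨0, ⟨le_refl 0, ht₁⟩, by
    simp only [Set.mem_preimage, Set.mem_Iic]; linarith [hdeq 0]⟩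
  have hSbdd : BddAbove S := ⟨t₁, fun x hx => hx.1.2⟩
  set t₂ : ℝ := sSup S with ht₂_def
  have ht₂S : t₂ ∈ S := hSclosed.csSup_mem hSne hSbdd
  have ht₂0 : 0 ≤ t₂ := ht₂S.1.1
  have ht₂t₁ : t₂ ≤ t₁ := ht₂S.1.2
  have hdt₂ : d t₂ ≤ 𝒯 := ht₂S.2
  have ht₂lt : t₂ < t₁ := by
    rcases lt_or_eq_of_le ht₂t₁ with h | h
    · exact h
    · exfalso; rw [h] at hdt₂; linarith [hdeq t₁, hM𝒯]
  -- d ≥ 𝒯 on [t₂, t₁]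
  have hge : ∀ τ ∈ Set.Icc t₂ t₁, 𝒯 ≤ d τ := by
    have hIoc : ∀ τ ∈ Set.Ioc t₂ t₁, 𝒯 ≤ d τ := by
      intro τ hτ
      by_contra hlt
      push_neg at hlt
      have : τ ∈ S := ⟨⟨ht₂0.trans (le_of_lt hτ.1), hτ.2⟩, le_of_lt hlt⟩
      exact absurd (le_csSup hSbdd this) (not_le.mpr hτ.1)
    have hC : IsClosed {τ | 𝒯 ≤ d τ} := isClosed_le continuous_const hd.continuous
    intro τ hτ
    have hsub : Set.Icc t₂ t₁ ⊆ {τ | 𝒯 ≤ d τ} := by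
      rw [← closure_Ioc (ne_of_lt ht₂lt)]
      exact hC.closure_subset_iff.mpr hIoc
    exact hsub hτ
  rcases le_or_gt t₁ (t₂ + T) with hcase | hcase
  · -- short interval: use claim A directly
    have := claimA t₂ t₁ ht₂0 ht₂t₁
    nlinarith [hdeq t₁, hM_def, hdt₂, hfs, hcase, hcon]
  · -- long interval: d is antitone on [t₂ + T, t₁]
    have hanti : AntitoneOn d (Set.Icc (t₂ + T) t₁) := by
      apply antitoneOn_of_deriv_nonpos (convex_Icc _ _) hd.continuous.continuousOn
        (hd.differentiableOn.mono interior_subset)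
      intro x hx
      rw [interior_Icc] at hx
      have hxT : T ≤ x := le_trans (by linarith) (le_of_lt hx.1)
      have hctlx := hctl x (by rw [hT_def] at hxT; exact hxT) ?_
      · rw [hderiv]; linarith [hctlx.1, hctlx.2]
      · intro τ hτ
        have hτ1 : t₂ ≤ τ := by
          have : x - Tctr - Tosc ≤ τ := hτ.1
          have : x - T ≤ τ := by rw [hT_def]; linarith
          linarith [hx.1]
        have hτ2 : τ ≤ t₁ := le_trans hτ.2 (le_of_lt hx.2)
        exact hge τ ⟨hτ1, hτ2⟩
    have h1 : d t₁ ≤ d (t₂ + T) := by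
      apply hanti (Set.mem_Icc.mpr ⟨le_refl _, le_of_lt hcase⟩)
        (Set.mem_Icc.mpr ⟨le_of_lt hcase, le_refl _⟩) (le_of_lt hcase)
    have h2 := claimA t₂ (t₂ + T) ht₂0 (by linarith)
    have h3 : d (t₂ + T) ≤ d t₂ + (fHi - sLo) * T := by
      have : t₂ + T - t₂ = T := by ring
      rw [this] at h2; exact h2
    nlinarith [hdeq t₁, hM_def, hdt₂, hcon, h1, h3]

/-- Lemma 1 of the paper: under the link model hypotheses and Eq. (1),
the two continuous clocks never drift apart by more than half the buffer
size minus the access-time margin. -/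
theorem clock_drift_bound
    (N sLo sHi fLo fHi δ Tctr Tosc τs τr 𝒯 : ℝ)
    (hN : 0 < N)
    (hsLo : 0 < sLo) (hs : sLo ≤ sHi) (hsf : sHi ≤ fLo) (hf : fLo ≤ fHi)
    (hδ0 : 0 < δ) (hδ1 : δ ≤ 1)
    (hTctr : 0 ≤ Tctr) (hTosc : 0 ≤ Tosc) (hτs : 0 ≤ τs) (hτr : 0 ≤ τr)
    (cs cr : ℝ → ℝ)
    (hcs : Differentiable ℝ cs) (hcr : Differentiable ℝ cr)
    -- (C1): initial clock values
    (hinit_s : cs 0 ∈ Set.Ioc (-δ) 0) (hinit_r : cr 0 ∈ Set.Ioc (-δ) 0)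
    -- rate bounds
    (hrate_s : ∀ t, 0 ≤ t → deriv cs t ∈ Set.Icc sLo fHi)
    (hrate_r : ∀ t, 0 ≤ t → deriv cr t ∈ Set.Icc sLo fHi)
    -- controlled response (L1 combined with C2, C3, C5)
    (hctl_s : ∀ t, Tctr + Tosc ≤ t →
      (∀ τ ∈ Set.Icc (t - Tctr - Tosc) t, cs τ - cr τ ≥ 𝒯) →
      deriv cs t ≤ sHi ∧ fLo ≤ deriv cr t)
    (hctl_r : ∀ t, Tctr + Tosc ≤ t →
      (∀ τ ∈ Set.Icc (t - Tctr - Tosc) t, cr τ - cs τ ≥ 𝒯) →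
      deriv cr t ≤ sHi ∧ fLo ≤ deriv cs t)
    -- Eq. (1)
    (hT1 : δ ≤ 𝒯)
    (hT2 : 𝒯 ≤ N / 2 - (fHi - sLo) * (Tosc + Tctr) - fHi * max τs τr) :
    ∀ t, 0 ≤ t → |cs t - cr t| ≤ N / 2 - fHi * max τs τr := by
  intro t ht
  have hinit1 : cs 0 - cr 0 < δ := by
    obtain ⟨h1, h2⟩ := hinit_s; obtain ⟨h3, h4⟩ := hinit_r; linarith
  have hinit2 : cr 0 - cs 0 < δ := by
    obtain ⟨h1, h2⟩ := hinit_s; obtain ⟨h3, h4⟩ := hinit_r; linarith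
  have hM : 𝒯 + (fHi - sLo) * (Tctr + Tosc) ≤ N / 2 - fHi * max τs τr := by
    nlinarith
  have h1 := clock_drift_aux sLo sHi fLo fHi δ Tctr Tosc 𝒯 hs hsf hf hδ0 hTctr hTosc
    cs cr hcs hcr hinit1 hrate_s hrate_r hctl_s hT1 t ht
  have h2 := clock_drift_aux sLo sHi fLo fHi δ Tctr Tosc 𝒯 hs hsf hf hδ0 hTctr hTosc
    cr cs hcr hcs hinit2 hrate_r hrate_s hctl_r hT1 t ht
  rw [abs_le]
  constructor <;> linarith
end

section
/- Under the link model hypotheses and condition (Eq. 1), the address pointers stay strictly separated around the ring (Eq. 2 of the paper): for all t ≥ 0, f⁺·max{τ_s, τ_r} ≤ |p_s(t) − p_r(t)| ≤ N − f⁺·max{τ_s, τ_r}, where p_s(t) = c_s(t) + N/2 and p_r(t) = c_r(t) are the sender and receiver address pointers. -/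
theorem pointer_separation
    (N sLo sHi fLo fHi δ Tctr Tosc τs τr 𝒯 : ℝ)
    (hN : 0 < N)
    (hsLo : 0 < sLo) (hs : sLo ≤ sHi) (hsf : sHi ≤ fLo) (hf : fLo ≤ fHi)
    (hδ0 : 0 < δ) (hδ1 : δ ≤ 1)
    (hTctr : 0 ≤ Tctr) (hTosc : 0 ≤ Tosc) (hτs : 0 ≤ τs) (hτr : 0 ≤ τr)
    (cs cr : ℝ → ℝ)
    (hcs : Differentiable ℝ cs) (hcr : Differentiable ℝ cr)
    -- (C1): initial clock values
    (hinit_s : cs 0 ∈ Set.Ioc (-δ) 0) (hinit_r : cr 0 ∈ Set.Ioc (-δ) 0)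
    -- rate bounds
    (hrate_s : ∀ t, 0 ≤ t → deriv cs t ∈ Set.Icc sLo fHi)
    (hrate_r : ∀ t, 0 ≤ t → deriv cr t ∈ Set.Icc sLo fHi)
    -- controlled response (L1 combined with C2, C3, C5)
    (hctl_s : ∀ t, Tctr + Tosc ≤ t →
      (∀ τ ∈ Set.Icc (t - Tctr - Tosc) t, cs τ - cr τ ≥ 𝒯) →
      deriv cs t ≤ sHi ∧ fLo ≤ deriv cr t)
    (hctl_r : ∀ t, Tctr + Tosc ≤ t →
      (∀ τ ∈ Set.Icc (t - Tctr - Tosc) t, cr τ - cs τ ≥ 𝒯) →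
      deriv cr t ≤ sHi ∧ fLo ≤ deriv cs t)
    -- Eq. (1)
    (hT1 : δ ≤ 𝒯)
    (hT2 : 𝒯 ≤ N / 2 - (fHi - sLo) * (Tosc + Tctr) - fHi * max τs τr)
    -- address pointers: p_s(t) = c_s(t) + N/2, p_r(t) = c_r(t)
    :
    ∀ t, 0 ≤ t →
      fHi * max τs τr ≤ |(cs t + N / 2) - cr t| ∧
      |(cs t + N / 2) - cr t| ≤ N - fHi * max τs τr := by
  set T : ℝ := Tctr + Tosc with hTdef
  have hT0 : 0 ≤ T := by positivity
  set K : ℝ := 𝒯 + (fHi - sLo) * T with hKdef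
  have hfs : 0 ≤ fHi - sLo := by linarith
  have hTK : 𝒯 ≤ K := by nlinarith
  -- Lipschitz-type bound: the difference grows at rate at most fHi - sLo
  have lip : ∀ (u v : ℝ → ℝ), Differentiable ℝ u → Differentiable ℝ v →
      (∀ t, 0 ≤ t → deriv u t ∈ Set.Icc sLo fHi) →
      (∀ t, 0 ≤ t → deriv v t ∈ Set.Icc sLo fHi) →
      ∀ a b, 0 ≤ a → a ≤ b →
        (u b - v b) - (u a - v a) ≤ (fHi - sLo) * (b - a) := by
    intro u v hu hv hur hvr a b ha hab
    set g : ℝ → ℝ := fun s => (fHi - sLo) * s - (u s - v s) with hg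
    have hder : ∀ s, HasDerivAt g ((fHi - sLo) * 1 - (deriv u s - deriv v s)) s := by
      intro s
      exact ((hasDerivAt_id s).const_mul (fHi - sLo)).sub
        (((hu s).hasDerivAt).sub ((hv s).hasDerivAt))
    have hmono : MonotoneOn g (Set.Icc a b) := by
      apply monotoneOn_of_deriv_nonneg (convex_Icc a b)
      · exact fun s _ => ((hder s).continuousAt).continuousWithinAt
      · intro s hs
        exact ((hder s).differentiableAt).differentiableWithinAt
      · intro s hs
        rw [interior_Icc] at hs
        have hs0 : 0 ≤ s := le_of_lt (lt_of_le_of_lt ha hs.1)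
        have h1 := (hur s hs0).2
        have h2 := (hvr s hs0).1
        rw [(hder s).deriv]
        linarith
    have := hmono (Set.left_mem_Icc.2 hab) (Set.right_mem_Icc.2 hab) hab
    simp only [g] at this
    nlinarith
  -- one-sided invariance
  have inv : ∀ (u v : ℝ → ℝ), Differentiable ℝ u → Differentiable ℝ v →
      (∀ t, 0 ≤ t → deriv u t ∈ Set.Icc sLo fHi) →
      (∀ t, 0 ≤ t → deriv v t ∈ Set.Icc sLo fHi) →
      (∀ t, T ≤ t → (∀ τ ∈ Set.Icc (t - T) t, u τ - v τ ≥ 𝒯) →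
        deriv u t ≤ sHi ∧ fLo ≤ deriv v t) →
      (u 0 - v 0 < 𝒯) →
      ∀ t, 0 ≤ t → u t - v t ≤ K := by
    intro u v hu hv hur hvr hctl hinit t ht
    by_contra hcon
    push_neg at hcon
    set S : Set ℝ := {τ | τ ∈ Set.Icc 0 t ∧ u τ - v τ ≤ K} with hS
    have hS0 : (0 : ℝ) ∈ S := ⟨Set.left_mem_Icc.2 ht, by linarith⟩
    have hSne : S.Nonempty := ⟨0, hS0⟩
    have hSbdd : BddAbove S := ⟨t, fun x hx => hx.1.2⟩
    have hScl : IsClosed S := by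
      have : S = Set.Icc 0 t ∩ (fun τ => u τ - v τ) ⁻¹' Set.Iic K := by
        ext x; simp [hS, Set.mem_Icc]
      rw [this]
      exact isClosed_Icc.inter (IsClosed.preimage (hu.sub hv).continuous isClosed_Iic)
    obtain ⟨t1, ht1S, ht1sup⟩ : ∃ x, x ∈ S ∧ ∀ y ∈ S, y ≤ x :=
      ⟨sSup S, hScl.csSup_mem hSne hSbdd, fun y hy => le_csSup hSbdd hy⟩
    have ht10 : 0 ≤ t1 := ht1S.1.1
    have ht1t : t1 ≤ t := ht1S.1.2
    have ht1K : u t1 - v t1 ≤ K := ht1S.2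
    have ht1lt : t1 < t := lt_of_le_of_ne ht1t (by rintro rfl; linarith)
    -- every point in (t1, t] has u - v > K
    have hgt : ∀ τ, t1 < τ → τ ≤ t → K < u τ - v τ := by
      intro τ h1 h2
      by_contra hc
      push_neg at hc
      have : τ ∈ S := ⟨⟨le_trans ht10 (le_of_lt h1), h2⟩, hc⟩
      have := ht1sup τ this
      linarith
    -- derivative of u - v is nonpositive on (t1, t]
    have hderneg : ∀ τ, t1 < τ → τ ≤ t → deriv u τ - deriv v τ ≤ 0 := by
      intro τ h1 h2
      have hKτ : K < u τ - v τ := hgt τ h1 h2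
      have hτ0 : 0 ≤ τ := le_trans ht10 (le_of_lt h1)
      have hgrow := lip u v hu hv hur hvr 0 τ le_rfl hτ0
      have hTτ : T ≤ τ := by
        by_contra hc
        push_neg at hc
        have : (fHi - sLo) * τ ≤ (fHi - sLo) * T :=
          mul_le_mul_of_nonneg_left (le_of_lt hc) hfs
        simp only [sub_zero] at hgrow
        nlinarith [hinit, hTK]
      have hcond : ∀ σ ∈ Set.Icc (τ - T) τ, u σ - v σ ≥ 𝒯 := by
        intro σ hσ
        have hσ0 : 0 ≤ σ := by
          have := hσ.1; linarith
        have h := lip u v hu hv hur hvr σ τ hσ0 hσ.2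
        have hτσ : τ - σ ≤ T := by have := hσ.1; linarith
        have : (fHi - sLo) * (τ - σ) ≤ (fHi - sLo) * T :=
          mul_le_mul_of_nonneg_left hτσ hfs
        simp only [hKdef] at hKτ
        linarith
      have := hctl τ hTτ hcond
      linarith
    -- antitone on [t1, t]
    have hanti : AntitoneOn (fun τ => u τ - v τ) (Set.Icc t1 t) := by
      apply antitoneOn_of_deriv_nonpos (convex_Icc t1 t)
      · exact (hu.sub hv).continuous.continuousOn
      · exact fun s _ => ((hu s).sub (hv s)).differentiableWithinAt
      · intro s hs
        rw [interior_Icc] at hs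
        have : deriv (fun τ => u τ - v τ) s = deriv u s - deriv v s :=
          deriv_sub (hu s) (hv s)
        rw [this]
        exact hderneg s hs.1 (le_of_lt hs.2)
    have := hanti (Set.left_mem_Icc.2 ht1t) (Set.right_mem_Icc.2 ht1t) ht1t
    simp only at this
    linarith
  -- apply in both directions
  have hinit1 : cs 0 - cr 0 < 𝒯 := by
    obtain ⟨h1, h2⟩ := hinit_s; obtain ⟨h3, h4⟩ := hinit_r; linarith
  have hinit2 : cr 0 - cs 0 < 𝒯 := by
    obtain ⟨h1, h2⟩ := hinit_s; obtain ⟨h3, h4⟩ := hinit_r; linarith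
  have hctl1 : ∀ t, T ≤ t → (∀ τ ∈ Set.Icc (t - T) t, cs τ - cr τ ≥ 𝒯) →
      deriv cs t ≤ sHi ∧ fLo ≤ deriv cr t := by
    intro t h1 h2
    exact hctl_s t h1 (by rw [sub_sub]; exact h2)
  have hctl2 : ∀ t, T ≤ t → (∀ τ ∈ Set.Icc (t - T) t, cr τ - cs τ ≥ 𝒯) →
      deriv cr t ≤ sHi ∧ fLo ≤ deriv cs t := by
    intro t h1 h2
    exact hctl_r t h1 (by rw [sub_sub]; exact h2)
  have h1 := inv cs cr hcs hcr hrate_s hrate_r hctl1 hinit1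
  have h2 := inv cr cs hcr hcs hrate_r hrate_s hctl2 hinit2
  intro t ht
  have hA := h1 t ht
  have hB := h2 t ht
  have hM0 : 0 ≤ fHi * max τs τr :=
    mul_nonneg (by linarith) (le_trans hτs (le_max_left _ _))
  have hKB : K ≤ N / 2 - fHi * max τs τr := by
    simp only [hKdef, hTdef]; nlinarith
  have hpos : 0 ≤ (cs t + N / 2) - cr t := by
    simp only [hKdef, hTdef] at hB hKB; linarith
  rw [abs_of_nonneg hpos]
  constructor <;> [skip; skip] <;>
    · simp only [hKdef, hTdef] at hA hB hKB; linarith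
end

section
/- Under the link model hypotheses and condition (Eq. 1), accesses of sender and receiver to the same buffer cell are separated in time (the core of Theorem 1, ensuring no buffer underrun or overflow): for all times t_s, t_r ≥ 0 and every integer k, if p_s(t_s) = p_r(t_r) + k·N (i.e., the sender pointer at time t_s and the receiver pointer at time t_r address the same cell modulo N), then |t_r − t_s| ≥ max{τ_s, τ_r}. -/
open Set

private lemma lip_bound (g : ℝ → ℝ) (hg : Differentiable ℝ g) (C : ℝ)
    (hd : ∀ t, 0 ≤ t → |deriv g t| ≤ C) :
    ∀ x, 0 ≤ x → ∀ y, 0 ≤ y → |g y - g x| ≤ C * |y - x| := by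
  intro x hx y hy
  have := (convex_Ici (0:ℝ)).norm_image_sub_le_of_norm_hasDerivWithin_le
    (f' := deriv g) (C := C)
    (fun t _ => (hg t).hasDerivAt.hasDerivWithinAt)
    (fun t ht => by simpa [Real.norm_eq_abs] using hd t ht)
    (mem_Ici.mpr hx) (mem_Ici.mpr hy)
  simpa [Real.norm_eq_abs] using this

private lemma one_side_bound (T C 𝒯 : ℝ) (hT : 0 ≤ T) (hC : 0 ≤ C)
    (g : ℝ → ℝ) (hg : Differentiable ℝ g) (h0 : g 0 < 𝒯)
    (hd : ∀ t, 0 ≤ t → |deriv g t| ≤ C)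
    (hctl : ∀ t, T ≤ t → (∀ τ ∈ Icc (t - T) t, 𝒯 ≤ g τ) → deriv g t ≤ 0) :
    ∀ t, 0 ≤ t → g t ≤ 𝒯 + C * T := by
  by_contra h
  push_neg at h
  obtain ⟨t₁, ht₁, hgt₁⟩ := h
  set S : Set ℝ := Icc 0 t₁ ∩ g ⁻¹' (Iic 𝒯) with hS
  have hSc : IsClosed S := isClosed_Icc.inter (isClosed_Iic.preimage hg.continuous)
  have h0S : (0:ℝ) ∈ S := ⟨⟨le_refl 0, ht₁⟩, le_of_lt h0⟩
  have hne : S.Nonempty := ⟨0, h0S⟩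
  have hbdd : BddAbove S := ⟨t₁, fun x hx => hx.1.2⟩
  set u := sSup S with hu
  have huS : u ∈ S := hSc.csSup_mem hne hbdd
  have hu0 : 0 ≤ u := huS.1.1
  have hut : u ≤ t₁ := huS.1.2
  have hgu : g u ≤ 𝒯 := huS.2
  have hgt : ∀ t, u < t → t ≤ t₁ → 𝒯 < g t := by
    intro t h1 h2
    by_contra hle
    push_neg at hle
    have : t ∈ S := ⟨⟨le_trans hu0 h1.le, h2⟩, hle⟩
    exact absurd (le_csSup hbdd this) (not_le.mpr h1)
  set v := min t₁ (u + T) with hv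
  have huv : u ≤ v := le_min hut (le_add_of_nonneg_right hT)
  have hvt : v ≤ t₁ := min_le_left _ _
  have hv0 : 0 ≤ v := le_trans hu0 huv
  have hA : g v ≤ g u + C * T := by
    have h1 : g v - g u ≤ C * |v - u| :=
      le_trans (le_abs_self _) (lip_bound g hg C hd u hu0 v hv0)
    have h2 : |v - u| ≤ T := by
      rw [abs_of_nonneg (by linarith)]
      have : v ≤ u + T := min_le_right _ _
      linarith
    nlinarith
  have hB : g t₁ ≤ g v := by
    have hanti : AntitoneOn g (Icc v t₁) := by
      apply antitoneOn_of_deriv_nonpos (convex_Icc v t₁) hg.continuous.continuousOn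
        (hg.differentiableOn.mono interior_subset)
      intro x hx
      rw [interior_Icc] at hx
      have hvlt : v < t₁ := lt_trans hx.1 hx.2
      have hveq : v = u + T := by
        rcases min_cases t₁ (u + T) with ⟨h1, _⟩ | ⟨h1, _⟩
        · rw [hv, h1] at hvlt; exact absurd hvlt (lt_irrefl _)
        · rw [hv, h1]
      have hux : u + T < x := hveq ▸ hx.1
      have hxT : T ≤ x := by linarith
      apply hctl x hxT
      intro τ hτ
      exact (hgt τ (by linarith [hτ.1]) (le_trans hτ.2 hx.2.le)).le
    exact hanti ⟨le_refl v, hvt⟩ ⟨hvt, le_refl t₁⟩ hvt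
  linarith

theorem access_time_separation
    (N sLo sHi fLo fHi δ Tctr Tosc τs τr 𝒯 : ℝ)
    (hN : 0 < N)
    (hsLo : 0 < sLo) (hs : sLo ≤ sHi) (hsf : sHi ≤ fLo) (hf : fLo ≤ fHi)
    (hδ0 : 0 < δ) (hδ1 : δ ≤ 1)
    (hTctr : 0 ≤ Tctr) (hTosc : 0 ≤ Tosc) (hτs : 0 ≤ τs) (hτr : 0 ≤ τr)
    (cs cr : ℝ → ℝ)
    (hcs : Differentiable ℝ cs) (hcr : Differentiable ℝ cr)
    -- (C1): initial clock values
    (hinit_s : cs 0 ∈ Set.Ioc (-δ) 0) (hinit_r : cr 0 ∈ Set.Ioc (-δ) 0)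
    -- rate bounds
    (hrate_s : ∀ t, 0 ≤ t → deriv cs t ∈ Set.Icc sLo fHi)
    (hrate_r : ∀ t, 0 ≤ t → deriv cr t ∈ Set.Icc sLo fHi)
    -- controlled response (L1 combined with C2, C3, C5)
    (hctl_s : ∀ t, Tctr + Tosc ≤ t →
      (∀ τ ∈ Set.Icc (t - Tctr - Tosc) t, cs τ - cr τ ≥ 𝒯) →
      deriv cs t ≤ sHi ∧ fLo ≤ deriv cr t)
    (hctl_r : ∀ t, Tctr + Tosc ≤ t →
      (∀ τ ∈ Set.Icc (t - Tctr - Tosc) t, cr τ - cs τ ≥ 𝒯) →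
      deriv cr t ≤ sHi ∧ fLo ≤ deriv cs t)
    -- Eq. (1)
    (hT1 : δ ≤ 𝒯)
    (hT2 : 𝒯 ≤ N / 2 - (fHi - sLo) * (Tosc + Tctr) - fHi * max τs τr)
    -- address pointers: p_s(t) = c_s(t) + N/2, p_r(t) = c_r(t)
    :
    ∀ tsnd trcv : ℝ, 0 ≤ tsnd → 0 ≤ trcv → ∀ k : ℤ,
      cs tsnd + N / 2 = cr trcv + (k : ℝ) * N →
      |trcv - tsnd| ≥ max τs τr := by
  set T := Tctr + Tosc with hTdef
  set C := fHi - sLo with hCdef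
  have hT0 : 0 ≤ T := by positivity
  have hC0 : 0 ≤ C := by simp only [hCdef]; linarith
  -- derivative of differences
  have hderiv_sub : ∀ (f g : ℝ → ℝ), Differentiable ℝ f → Differentiable ℝ g →
      ∀ t : ℝ, deriv (fun x => f x - g x) t = deriv f t - deriv g t := by
    intro f g hf hg t
    exact deriv_sub (hf t) (hg t)
  have habs_sub : ∀ t, 0 ≤ t → |deriv (fun x => cs x - cr x) t| ≤ C := by
    intro t ht
    rw [hderiv_sub cs cr hcs hcr t]
    have h1 := hrate_s t ht
    have h2 := hrate_r t ht
    rw [abs_le]; constructor <;> [skip; skip] <;>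
      simp only [hCdef] <;> [linarith [h1.1, h2.2]; linarith [h1.2, h2.1]]
  have habs_sub' : ∀ t, 0 ≤ t → |deriv (fun x => cr x - cs x) t| ≤ C := by
    intro t ht
    rw [hderiv_sub cr cs hcr hcs t]
    have h1 := hrate_s t ht
    have h2 := hrate_r t ht
    rw [abs_le]; constructor <;>
      simp only [hCdef] <;> [linarith [h2.1, h1.2]; linarith [h2.2, h1.1]]
  -- skew invariant
  have hbound1 : ∀ t, 0 ≤ t → cs t - cr t ≤ 𝒯 + C * T := by
    have := one_side_bound T C 𝒯 hT0 hC0 (fun x => cs x - cr x)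
      (hcs.sub hcr) (by have := hinit_s.2; have := hinit_r.1; linarith)
      habs_sub ?_
    · intro t ht; exact this t ht
    · intro t ht hwin
      rw [hderiv_sub cs cr hcs hcr t]
      have := hctl_s t ht (fun τ hτ => by
        refine hwin τ ?_
        rwa [sub_sub] at hτ)
      linarith [this.1, this.2]
  have hbound2 : ∀ t, 0 ≤ t → cr t - cs t ≤ 𝒯 + C * T := by
    have := one_side_bound T C 𝒯 hT0 hC0 (fun x => cr x - cs x)
      (hcr.sub hcs) (by have := hinit_s.1; have := hinit_r.2; linarith)
      habs_sub' ?_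
    · intro t ht; exact this t ht
    · intro t ht hwin
      rw [hderiv_sub cr cs hcr hcs t]
      have := hctl_r t ht (fun τ hτ => by
        refine hwin τ ?_
        rwa [sub_sub] at hτ)
      linarith [this.1, this.2]
  have hskew : ∀ t, 0 ≤ t → |cs t - cr t| ≤ 𝒯 + C * T := by
    intro t ht
    rw [abs_le]
    exact ⟨by linarith [hbound2 t ht], hbound1 t ht⟩
  -- final argument
  intro tsnd trcv hts htr k hk
  by_contra hlt
  push_neg at hlt
  set M := max τs τr with hM
  have hM0 : 0 ≤ M := le_trans hτs (le_max_left _ _)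
  have hMpos : 0 < M := lt_of_le_of_lt (abs_nonneg _) hlt
  have hfHi : 0 < fHi := by linarith
  have hcrf : ∀ t, 0 ≤ t → |deriv cr t| ≤ fHi := by
    intro t ht
    have := hrate_r t ht
    rw [abs_le]; exact ⟨by linarith [this.1], this.2⟩
  have hlip : |cr trcv - cr tsnd| ≤ fHi * |trcv - tsnd| :=
    lip_bound cr hcr fHi hcrf tsnd hts trcv htr
  have hlip2 : |cr trcv - cr tsnd| < fHi * M := by
    calc |cr trcv - cr tsnd| ≤ fHi * |trcv - tsnd| := hlip
      _ < fHi * M := by exact mul_lt_mul_of_pos_left hlt hfHi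
  have hsk := hskew tsnd hts
  have hkey : |cs tsnd - cr trcv| < N / 2 := by
    have htri : |cs tsnd - cr trcv| ≤ |cs tsnd - cr tsnd| + |cr trcv - cr tsnd| := by
      have := abs_sub_le (cs tsnd) (cr tsnd) (cr trcv)
      rw [abs_sub_comm (cr tsnd) (cr trcv)] at this
      exact this
    have heq : C * T = C * (Tosc + Tctr) := by rw [hTdef]; ring
    calc |cs tsnd - cr trcv| ≤ |cs tsnd - cr tsnd| + |cr trcv - cr tsnd| := htri
      _ < (𝒯 + C * T) + fHi * M := by linarith
      _ ≤ N / 2 := by rw [heq]; simp only [hCdef, hM]; linarith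
  have hval : cs tsnd - cr trcv = (k:ℝ) * N - N / 2 := by linarith
  rw [hval, abs_lt] at hkey
  have hk0 : (0:ℝ) < (k:ℝ) := by nlinarith
  have hk1 : (k:ℝ) < 1 := by nlinarith
  have : (0:ℤ) < k := by exact_mod_cast hk0
  have : k < 1 := by exact_mod_cast hk1
  omega
end

section
/- Under the link model hypotheses and condition (Eq. 1), and assuming additionally max{τ_s, τ_r} > 0, the sender and receiver address pointers never coincide modulo the ring size, i.e., they cannot 'pass' each other: for all t ≥ 0 and every integer k, p_s(t) − p_r(t) ≠ k·N, where p_s(t) = c_s(t) + N/2 and p_r(t) = c_r(t). -/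
lemma drift_bound (sLo sHi fLo fHi δ T 𝒯 : ℝ)
    (hsLo : 0 < sLo) (hs : sLo ≤ sHi) (hsf : sHi ≤ fLo) (hf : fLo ≤ fHi)
    (hδ0 : 0 < δ) (hT : 0 ≤ T)
    (f g : ℝ → ℝ)
    (hfd : Differentiable ℝ f) (hgd : Differentiable ℝ g)
    (hinit : f 0 - g 0 < δ)
    (hrf : ∀ t, 0 ≤ t → deriv f t ∈ Set.Icc sLo fHi)
    (hrg : ∀ t, 0 ≤ t → deriv g t ∈ Set.Icc sLo fHi)
    (hctl : ∀ t, T ≤ t →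
      (∀ τ ∈ Set.Icc (t - T) t, f τ - g τ ≥ 𝒯) →
      deriv f t ≤ sHi ∧ fLo ≤ deriv g t)
    (hT1 : δ ≤ 𝒯) :
    ∀ t, 0 ≤ t → f t - g t ≤ 𝒯 + (fHi - sLo) * T := by
  set L := fHi - sLo with hLdef
  have hL : 0 ≤ L := by simp [hLdef]; linarith
  set d := fun t => f t - g t with hd
  set B := 𝒯 + L * T with hB
  have hdd : Differentiable ℝ d := hfd.sub hgd
  have hderiv : ∀ t, deriv d t = deriv f t - deriv g t := fun t =>
    deriv_sub (hfd t) (hgd t)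
  -- Lipschitz bound on [0, ∞)
  have key : ∀ a b : ℝ, 0 ≤ a → a ≤ b → |d b - d a| ≤ L * (b - a) := by
    intro a b ha hab
    have := Convex.norm_image_sub_le_of_norm_deriv_le
      (f := d) (s := Set.Ici (0:ℝ)) (C := L)
      (fun x _ => hdd x)
      (fun x hx => by
        rw [Real.norm_eq_abs, hderiv, abs_le]
        have h1 := hrf x hx
        have h2 := hrg x hx
        simp only [Set.mem_Icc] at h1 h2
        constructor <;> [skip; skip] <;> simp [hLdef] <;> linarith)
      (convex_Ici 0) (Set.mem_Ici.mpr (ha.trans hab)) (Set.mem_Ici.mpr ha)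
    rw [Real.norm_eq_abs, Real.norm_eq_abs, abs_sub_comm (d a), abs_sub_comm a,
      abs_of_nonneg (by linarith : (0:ℝ) ≤ b - a)] at this
    exact this
  have step1 : ∀ t, 0 ≤ t → t ≤ T → d t < B := by
    intro t ht htT
    have h1 := key 0 t le_rfl ht
    have h2 : d t - d 0 ≤ L * T := by
      have := (abs_le.mp h1).2
      nlinarith
    have : d 0 < δ := hinit
    simp only [hB]
    linarith
  intro t1 ht1
  by_contra hcon
  push_neg at hcon
  have hcon' : B < d t1 := hcon
  have hgtT : ∀ t, 0 ≤ t → B ≤ d t → T < t := by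
    intro t ht hBt
    by_contra h
    push_neg at h
    exact absurd hBt (not_le.mpr (step1 t ht h))
  -- last time before t1 where d ≤ B
  set A := Set.Icc (0:ℝ) t1 ∩ d ⁻¹' Set.Iic B with hA
  have hAclosed : IsClosed A :=
    isClosed_Icc.inter (isClosed_Iic.preimage hdd.continuous)
  have hAne : A.Nonempty := by
    refine ⟨0, Set.mem_Icc.mpr ⟨le_rfl, ht1⟩, ?_⟩
    simp only [Set.mem_preimage, Set.mem_Iic]
    have : d 0 < δ := hinit
    simp only [hB]
    nlinarith
  have hAbdd : BddAbove A := ⟨t1, fun x hx => hx.1.2⟩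
  set t2 := sSup A with ht2
  have ht2mem : t2 ∈ A := hAclosed.csSup_mem hAne hAbdd
  have ht2le : t2 ≤ t1 := ht2mem.1.2
  have ht20 : 0 ≤ t2 := ht2mem.1.1
  have hdt2 : d t2 ≤ B := ht2mem.2
  have hgt : ∀ t, t2 < t → t ≤ t1 → B < d t := by
    intro t ht ht'
    by_contra h
    push_neg at h
    have : t ∈ A := ⟨Set.mem_Icc.mpr ⟨ht20.trans ht.le, ht'⟩, h⟩
    exact absurd (le_csSup hAbdd this) (not_le.mpr ht)
  have ht2lt : t2 < t1 := lt_of_le_of_ne ht2le (fun h => by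
    rw [h] at hdt2; linarith [hcon'])
  -- derivative nonpositive on the interior
  have hderivle : ∀ x ∈ Set.Ioo t2 t1, deriv d x ≤ 0 := by
    intro x hx
    have hxB : B < d x := hgt x hx.1 hx.2.le
    have hx0 : 0 ≤ x := ht20.trans hx.1.le
    have hxT : T < x := hgtT x hx0 hxB.le
    have hwin : ∀ τ ∈ Set.Icc (x - T) x, f τ - g τ ≥ 𝒯 := by
      intro τ hτ
      have hτ0 : 0 ≤ τ := by linarith [hτ.1]
      have h1 := key τ x hτ0 hτ.2
      have h2 : d x - d τ ≤ L * T := by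
        have := (abs_le.mp h1).2
        have : d x - d τ ≤ L * (x - τ) := this
        nlinarith [hτ.1]
      show 𝒯 ≤ d τ
      simp only [hB] at hxB
      linarith
    obtain ⟨h1, h2⟩ := hctl x hxT.le hwin
    rw [hderiv]
    linarith
  have hanti : AntitoneOn d (Set.Icc t2 t1) := by
    apply antitoneOn_of_deriv_nonpos (convex_Icc t2 t1) hdd.continuous.continuousOn
      (fun x _ => (hdd x).differentiableWithinAt)
    rwa [interior_Icc]
  have := hanti (Set.mem_Icc.mpr ⟨le_rfl, ht2le⟩) (Set.mem_Icc.mpr ⟨ht2le, le_rfl⟩) ht2le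
  linarith [hcon']


theorem pointers_never_coincide
    (N sLo sHi fLo fHi δ Tctr Tosc τs τr 𝒯 : ℝ)
    (hN : 0 < N)
    (hsLo : 0 < sLo) (hs : sLo ≤ sHi) (hsf : sHi ≤ fLo) (hf : fLo ≤ fHi)
    (hδ0 : 0 < δ) (hδ1 : δ ≤ 1)
    (hTctr : 0 ≤ Tctr) (hTosc : 0 ≤ Tosc) (hτs : 0 ≤ τs) (hτr : 0 ≤ τr)
    (cs cr : ℝ → ℝ)
    (hcs : Differentiable ℝ cs) (hcr : Differentiable ℝ cr)
    -- (C1): initial clock values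
    (hinit_s : cs 0 ∈ Set.Ioc (-δ) 0) (hinit_r : cr 0 ∈ Set.Ioc (-δ) 0)
    -- rate bounds
    (hrate_s : ∀ t, 0 ≤ t → deriv cs t ∈ Set.Icc sLo fHi)
    (hrate_r : ∀ t, 0 ≤ t → deriv cr t ∈ Set.Icc sLo fHi)
    -- controlled response (L1 combined with C2, C3, C5)
    (hctl_s : ∀ t, Tctr + Tosc ≤ t →
      (∀ τ ∈ Set.Icc (t - Tctr - Tosc) t, cs τ - cr τ ≥ 𝒯) →
      deriv cs t ≤ sHi ∧ fLo ≤ deriv cr t)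
    (hctl_r : ∀ t, Tctr + Tosc ≤ t →
      (∀ τ ∈ Set.Icc (t - Tctr - Tosc) t, cr τ - cs τ ≥ 𝒯) →
      deriv cr t ≤ sHi ∧ fLo ≤ deriv cs t)
    -- Eq. (1)
    (hT1 : δ ≤ 𝒯)
    (hT2 : 𝒯 ≤ N / 2 - (fHi - sLo) * (Tosc + Tctr) - fHi * max τs τr)
    (hτpos : 0 < max τs τr)
    -- address pointers: p_s(t) = c_s(t) + N/2, p_r(t) = c_r(t)
    :
    ∀ t, 0 ≤ t → ∀ k : ℤ, (cs t + N / 2) - cr t ≠ (k : ℝ) * N := by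
  set T := Tctr + Tosc with hTdef
  have hT : 0 ≤ T := by positivity
  have hwin : ∀ t : ℝ, Set.Icc (t - T) t = Set.Icc (t - Tctr - Tosc) t := by
    intro t; rw [hTdef, sub_sub]
  have hb1 : ∀ t, 0 ≤ t → cs t - cr t ≤ 𝒯 + (fHi - sLo) * T := by
    apply drift_bound sLo sHi fLo fHi δ T 𝒯 hsLo hs hsf hf hδ0 hT cs cr hcs hcr
      (by linarith [hinit_s.1, hinit_s.2, hinit_r.1, hinit_r.2]) hrate_s hrate_r
      (fun t ht hw => hctl_s t ht (by rw [← hwin]; exact hw)) hT1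
  have hb2 : ∀ t, 0 ≤ t → cr t - cs t ≤ 𝒯 + (fHi - sLo) * T := by
    apply drift_bound sLo sHi fLo fHi δ T 𝒯 hsLo hs hsf hf hδ0 hT cr cs hcr hcs
      (by linarith [hinit_s.1, hinit_s.2, hinit_r.1, hinit_r.2]) hrate_r hrate_s
      (fun t ht hw => hctl_r t ht (by rw [← hwin]; exact hw)) hT1
  have hfHi : 0 < fHi := lt_of_lt_of_le hsLo (hs.trans (hsf.trans hf))
  have hBlt : 𝒯 + (fHi - sLo) * T < N / 2 := by
    have : 0 < fHi * max τs τr := mul_pos hfHi hτpos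
    have hT2' : 𝒯 + (fHi - sLo) * T ≤ N / 2 - fHi * max τs τr := by
      rw [hTdef]; nlinarith [hT2]
    linarith
  intro t ht k hk
  have h1 : cs t - cr t < N / 2 := lt_of_le_of_lt (hb1 t ht) hBlt
  have h2 : cr t - cs t < N / 2 := lt_of_le_of_lt (hb2 t ht) hBlt
  have hk0 : 0 < (k : ℝ) * N := by linarith
  have hk1 : (k : ℝ) * N < N := by linarith
  have hkpos : (0 : ℝ) < (k : ℝ) := by
    rcases mul_pos_iff.mp hk0 with ⟨h, _⟩ | ⟨_, h⟩
    · exact h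
    · linarith
  have hklt : (k : ℝ) < 1 := by
    have := lt_of_mul_lt_mul_right (by linarith : (k : ℝ) * N < 1 * N) hN.le
    exact this
  have : (0 : ℤ) < k := by exact_mod_cast hkpos
  have : k < 1 := by exact_mod_cast hklt
  omega
end
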